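/- With the above setup, the image of a_s is itself a C-submodule of C ⊗_A C for the left-factor action: one has a_s(c) = c·(X ⊗ 1 + 1 ⊗ X) for every c ∈ C, so the image of a_s equals C·(X ⊗ 1 + 1 ⊗ X); moreover the quotient module (C ⊗_A C)/im(a_s) is a free C-module of rank 1, generated by the class of 1 ⊗ 1. -/

import Mathlib

open TensorProduct

/-- The subring of fixed points of a ring endomorphism `s`. -/
def fixedSubring {C : Type*} [CommRing C] (s : C →+* C) : Subring C :=
  RingHom.eqLocus s (RingHom.id C)

/-- The map `a_s : C → C ⊗_{C^s} C`, `c ↦ X ⊗ c + 1 ⊗ X·c`. -/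
noncomputable def aMap {C : Type*} [CommRing C] (s : C →+* C) (X : C) (c : C) :
    C ⊗[fixedSubring s] C :=
  X ⊗ₜ c + 1 ⊗ₜ (X * c)

set_option maxHeartbeats 1000000 in
/-- `a_s c = c • (X ⊗ 1 + 1 ⊗ X)` for the left-factor `C`-action, the image of
`a_s` is the cyclic `C`-submodule generated by `X ⊗ 1 + 1 ⊗ X`, and the quotient of `C ⊗_A C`
by the image of `a_s` is a free `C`-module of rank 1 generated by the class of `1 ⊗ 1`. -/
theorem stmt2 {C : Type*} [CommRing C] (s : C →+* C) (hs : ∀ c, s (s c) = c)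
    (X : C) (hX : s X = -X)
    (b : Module.Basis (Fin 2) (fixedSubring s) C) (hb0 : b 0 = 1) (hb1 : b 1 = X) :
    (∀ c : C, aMap s X c = c • ((X ⊗ₜ 1 + 1 ⊗ₜ X : C ⊗[fixedSubring s] C))) ∧
    Set.range (aMap s X) =
      ↑(Submodule.span C {(X ⊗ₜ 1 + 1 ⊗ₜ X : C ⊗[fixedSubring s] C)}) ∧
    ∃ bq : Module.Basis (Fin 1) C
        ((C ⊗[fixedSubring s] C) ⧸ Submodule.span C (Set.range (aMap s X))),
      bq 0 = Submodule.Quotient.mk ((1 : C) ⊗ₜ (1 : C)) := by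
  have hX2 : X * X ∈ fixedSubring s := by
    show s (X * X) = X * X
    rw [map_mul, hX]; ring
  set g : C ⊗[fixedSubring s] C := X ⊗ₜ 1 + 1 ⊗ₜ X with hg
  have key : (1 : C) ⊗ₜ[fixedSubring s] (X * X) = (X * X) ⊗ₜ[fixedSubring s] (1 : C) := by
    have h1 : (X * X : C) = (⟨X * X, hX2⟩ : fixedSubring s) • (1 : C) := by
      show X * X = X * X * 1; ring
    rw [h1, tmul_smul, smul_tmul']
  -- Part 1
  set F : C →ₗ[fixedSubring s] C ⊗[fixedSubring s] C := {
    toFun := fun c => X ⊗ₜ c + 1 ⊗ₜ (X * c)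
    map_add' := fun x y => by simp only [mul_add, tmul_add]; abel
    map_smul' := fun a c => by
      simp only [RingHom.id_apply, tmul_smul, mul_smul_comm, smul_add] } with hF
  set G : C →ₗ[fixedSubring s] C ⊗[fixedSubring s] C := {
    toFun := fun c => c • g
    map_add' := fun x y => by simp only [add_smul]
    map_smul' := fun a c => by simp only [RingHom.id_apply, smul_assoc] } with hG
  have hFG : F = G := by
    apply b.ext
    intro i
    fin_cases i
    · show F (b 0) = G (b 0)
      rw [hb0]
      show X ⊗ₜ (1:C) + 1 ⊗ₜ (X * 1) = (1:C) • g
      rw [mul_one, one_smul, hg]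
    · show F (b 1) = G (b 1)
      rw [hb1]
      show X ⊗ₜ X + 1 ⊗ₜ (X * X) = X • g
      rw [key, hg, smul_add, smul_tmul', smul_tmul', smul_eq_mul, smul_eq_mul, mul_one]
      abel
  have h1 : ∀ c : C, aMap s X c = c • g := by
    intro c
    show X ⊗ₜ c + 1 ⊗ₜ (X * c) = c • g
    exact DFunLike.congr_fun hFG c
  -- Part 2
  have h2 : Set.range (aMap s X) = ↑(Submodule.span C {g}) := by
    ext t
    simp only [Set.mem_range, SetLike.mem_coe, Submodule.mem_span_singleton]
    constructor
    · rintro ⟨c, rfl⟩; exact ⟨c, (h1 c).symm⟩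
    · rintro ⟨c, rfl⟩; exact ⟨c, h1 c⟩
  refine ⟨h1, h2, ?_⟩
  -- Part 3
  have hspan : Submodule.span C (Set.range (aMap s X)) = Submodule.span C {g} := by
    rw [h2]; exact Submodule.span_eq _
  rw [hspan]
  obtain ⟨B, hB0, hB1⟩ : ∃ B : Module.Basis (Fin 2) C (C ⊗[fixedSubring s] C),
      B 0 = (1 : C) ⊗ₜ (1 : C) ∧ B 1 = (1 : C) ⊗ₜ X :=
    ⟨b.baseChange C, by rw [Module.Basis.baseChange_apply, hb0], by rw [Module.Basis.baseChange_apply, hb1]⟩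
  obtain ⟨f, hf0, hf1⟩ : ∃ f : (C ⊗[fixedSubring s] C) →ₗ[C] C,
      f (B 0) = 1 ∧ f (B 1) = -X :=
    ⟨B.constr C ![1, -X], by rw [Module.Basis.constr_basis]; rfl, by rw [Module.Basis.constr_basis]; rfl⟩
  have hgB : g = X • B 0 + B 1 := by
    rw [hB0, hB1, smul_tmul', smul_eq_mul, mul_one, hg]
  have hfg : f g = 0 := by
    rw [hgB, map_add, map_smul, hf0, hf1, smul_eq_mul, mul_one]
    ring
  have hf11 : f ((1:C) ⊗ₜ (1:C)) = 1 := by rw [← hB0, hf0]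
  have hker : ∀ t : C ⊗[fixedSubring s] C, f t = 0 → t ∈ Submodule.span C {g} := by
    intro t ht
    have hrep := B.sum_repr t
    rw [Fin.sum_univ_two] at hrep
    have hft : f (B.repr t 0 • B 0 + B.repr t 1 • B 1) = 0 := by rw [hrep, ht]
    rw [map_add, map_smul, map_smul, hf0, hf1, smul_eq_mul, smul_eq_mul, mul_one] at hft
    have hr : (B.repr t 0 : C) = B.repr t 1 * X := by linear_combination hft
    refine Submodule.mem_span_singleton.2 ⟨B.repr t 1, ?_⟩
    rw [hgB, smul_add, smul_smul, ← hr]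
    exact hrep
  have hle : Submodule.span C {g} ≤ LinearMap.ker f := by
    rw [Submodule.span_le, Set.singleton_subset_iff]
    exact LinearMap.mem_ker.mpr hfg
  obtain ⟨e, he⟩ : ∃ e : ((C ⊗[fixedSubring s] C) ⧸ Submodule.span C {g}) ≃ₗ[C] C,
      e (Submodule.Quotient.mk ((1:C) ⊗ₜ (1:C))) = 1 := by
    refine ⟨LinearEquiv.ofLinear (Submodule.liftQ (Submodule.span C {g}) f hle)
      ((Submodule.mkQ _) ∘ₗ (LinearMap.toSpanSingleton C _ ((1:C) ⊗ₜ (1:C)))) ?_ ?_, ?_⟩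
    · apply LinearMap.ext
      intro c
      simp only [LinearMap.comp_apply, LinearMap.toSpanSingleton_apply, Submodule.mkQ_apply,
        Submodule.liftQ_apply, LinearMap.id_apply, map_smul, hf11, smul_eq_mul, mul_one]
    · apply Submodule.linearMap_qext
      apply LinearMap.ext
      intro t
      simp only [LinearMap.comp_apply, Submodule.mkQ_apply, Submodule.liftQ_apply,
        LinearMap.toSpanSingleton_apply, LinearMap.id_apply]
      rw [Submodule.Quotient.eq]
      apply hker
      rw [map_sub, map_smul, hf11, smul_eq_mul, mul_one, sub_self]
    · simp only [LinearEquiv.ofLinear_apply, Submodule.liftQ_apply, hf11]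
  refine ⟨(Module.Basis.singleton (Fin 1) C).map e.symm, ?_⟩
  rw [Module.Basis.map_apply, Module.Basis.singleton_apply, LinearEquiv.symm_apply_eq, he]
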